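/- The rational function z²·(2z⁸ + 9z⁶ − 7z⁴ − 61z² + 13)/(2z² − 1) is not an element of ℤ[z^{±1}]. -/

import Mathlib

noncomputable section

/-- The field `ℚ(z)` of rational functions in one variable `z`. -/
abbrev F1 : Type := RatFunc ℚ

def z : F1 := RatFunc.X

/-- The ring of integer Laurent polynomials `ℤ[z^{±1}]` as a subring of `ℚ(z)`. -/
def LaurentZ : Subring F1 := Subring.closure {z, z⁻¹}

def φ : Polynomial ℤ →+* F1 :=
  (algebraMap (Polynomial ℚ) F1).comp (Polynomial.mapRingHom (Int.castRingHom ℚ))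

lemma φ_inj : Function.Injective φ := by
  have h : Function.Injective ((algebraMap (Polynomial ℚ) F1) ∘
      (Polynomial.map (Int.castRingHom ℚ))) :=
    (IsFractionRing.injective (Polynomial ℚ) F1).comp
      (Polynomial.map_injective (Int.castRingHom ℚ) Int.cast_injective)
  simpa [φ, Function.Injective] using h

lemma φ_X : φ Polynomial.X = z := by
  simp [φ, z, RatFunc.algebraMap_X]

def A : Subring F1 where
  carrier := {x | ∃ (n : ℕ) (p : Polynomial ℤ), x * z ^ n = φ p}
  one_mem' := ⟨0, 1, by simp⟩
  zero_mem' := ⟨0, 0, by simp⟩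
  mul_mem' := by
    rintro x y ⟨a, p, hp⟩ ⟨b, q, hq⟩
    exact ⟨a + b, p * q, by rw [map_mul, ← hp, ← hq]; ring⟩
  add_mem' := by
    rintro x y ⟨a, p, hp⟩ ⟨b, q, hq⟩
    refine ⟨a + b, p * Polynomial.X ^ b + q * Polynomial.X ^ a, ?_⟩
    rw [map_add, map_mul, map_mul, map_pow, map_pow, φ_X, ← hp, ← hq]; ring
  neg_mem' := by
    rintro x ⟨a, p, hp⟩
    exact ⟨a, -p, by rw [map_neg, ← hp]; ring⟩

lemma z_ne : z ≠ 0 := RatFunc.X_ne_zero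

lemma laurent_le : LaurentZ ≤ A := by
  apply Subring.closure_le.mpr
  rintro x (rfl | rfl)
  · exact ⟨0, Polynomial.X, by simpa using φ_X.symm⟩
  · exact ⟨1, 1, by simp [inv_mul_cancel₀ z_ne]⟩

theorem stmt_7 :
    z ^ 2 * (2 * z ^ 8 + 9 * z ^ 6 - 7 * z ^ 4 - 61 * z ^ 2 + 13) / (2 * z ^ 2 - 1)
      ∉ LaurentZ := by
  intro hmem
  have e1 : ((2:ZMod 7) * 2 ^ 2 - 1) = 0 := by decide
  have e2 : ((2:ZMod 7) ^ 2 * (2 * 2 ^ 8 + 9 * 2 ^ 6 - 7 * 2 ^ 4 - 61 * 2 ^ 2 + 13)) = 5 := by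
    decide
  have e3 : (5:ZMod 7) ≠ 0 := by decide
  have e4 : (2:ZMod 7) ≠ 0 := by decide
  haveI : Fact (Nat.Prime 7) := ⟨by norm_num⟩
  obtain ⟨n, p, hp⟩ := laurent_le hmem
  set N : Polynomial ℤ := Polynomial.X ^ 2 *
    (2 * Polynomial.X ^ 8 + 9 * Polynomial.X ^ 6 - 7 * Polynomial.X ^ 4
      - 61 * Polynomial.X ^ 2 + 13) with hN
  have hNum : z ^ 2 * (2 * z ^ 8 + 9 * z ^ 6 - 7 * z ^ 4 - 61 * z ^ 2 + 13) = φ N := by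
    simp [hN, map_mul, map_add, map_sub, map_pow, map_ofNat, φ_X]
  have hD : (2 * z ^ 2 - 1 : F1) = φ (2 * Polynomial.X ^ 2 - 1) := by
    simp [map_mul, map_sub, map_pow, map_ofNat, φ_X]
  have hDne : (2 * z ^ 2 - 1 : F1) ≠ 0 := by
    rw [hD]
    intro h
    have := φ_inj (h.trans (map_zero φ).symm)
    have h2 : ((2 * Polynomial.X ^ 2 - 1 : Polynomial ℤ)).coeff 2 = 0 := by
      rw [this]; simp
    simp [Polynomial.coeff_sub, Polynomial.coeff_one] at h2
  have key : φ (N * Polynomial.X ^ n) = φ (p * (2 * Polynomial.X ^ 2 - 1)) := by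
    rw [map_mul φ N, map_pow, φ_X, map_mul φ p, ← hNum, ← hD, ← hp]
    field_simp
    rw [mul_div_assoc, div_self (show (z ^ 2 * 2 - 1 : F1) ≠ 0 by rwa [mul_comm] at hDne), mul_one]
  have keyP := φ_inj key
  -- reduce mod 7 and evaluate at 2
  have heq := congrArg (fun q : Polynomial ℤ =>
    Polynomial.eval (2 : ZMod 7) (q.map (Int.castRingHom (ZMod 7)))) keyP
  simp [hN, Polynomial.eval_map, Polynomial.eval₂_mul, Polynomial.eval₂_add,
    Polynomial.eval₂_sub, Polynomial.eval₂_pow, Polynomial.eval₂_ofNat,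
    Polynomial.eval₂_X] at heq
  rw [e1, mul_zero, e2] at heq
  exact absurd heq (mul_ne_zero e3 (pow_ne_zero _ e4))

end
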